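/- The following exact evaluation holds: ( Γ(10/15)³·Γ(12/15)²·Γ(6/15) / (Γ(8/15)²·Γ(14/15)³·Γ(2/15)) )² = (3/16)·√5·( sin(π/15)³·sin(6π/15) / (sin(2π/15)·sin(3π/15)⁴·sin(5π/15)³) ). -/

import Mathlib

open Real Set

lemma st16_convexOn_logGamma_comp (a b : ℝ) (ha : 0 < a) (hb : 0 ≤ b) :
    ConvexOn ℝ (Ioi (0:ℝ)) (fun s : ℝ => Real.log (Real.Gamma (a * s + b))) := by
  have h := Real.convexOn_log_Gamma.comp_affineMap
      ((DistribMulAction.toLinearMap ℝ ℝ a).toAffineMap + AffineMap.const ℝ ℝ b)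
  refine ConvexOn.subset (ConvexOn.congr h ?_) ?_ (convex_Ioi _)
  · intro x hx
    simp [Function.comp, DistribMulAction.toLinearMap, DistribSMul.toLinearMap_apply, smul_eq_mul]
  · intro x hx
    simp only [Set.mem_preimage, Set.mem_Ioi] at *
    show (0:ℝ) < _
    simp [DistribMulAction.toLinearMap, DistribSMul.toLinearMap_apply, smul_eq_mul]
    positivity

lemma st16_rpow_nat (x : ℝ) (hx : 0 < x) (r : ℝ) (n m : ℕ) (h : r * n = (m:ℝ)) :
    (x ^ r) ^ n = x ^ m := by
  rw [← Real.rpow_natCast (x ^ r) n, ← Real.rpow_mul hx.le, h, Real.rpow_natCast]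

lemma st16_sqrtpi_pow : (√π) ^ (30:ℕ) = π ^ (15:ℕ) := by
  rw [show (30:ℕ) = 2*15 from rfl, pow_mul, Real.sq_sqrt Real.pi_pos.le]

lemma st16_sqrt3_pow : (√3:ℝ) ^ (10:ℕ) = 3 ^ (5:ℕ) := by
  rw [show (10:ℕ) = 2*5 from rfl, pow_mul, Real.sq_sqrt (by norm_num : (0:ℝ) ≤ 3)]

lemma st16_sqrt5_pow : (√5:ℝ) ^ (6:ℕ) = 5 ^ (3:ℕ) := by
  rw [show (6:ℕ) = 2*3 from rfl, pow_mul, Real.sq_sqrt (by norm_num : (0:ℝ) ≤ 5)]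

lemma st16_Gamma_third_mul : Real.Gamma (1/3) * Real.Gamma (2/3) = 2 * π / √3 := by
  have h := Real.Gamma_mul_Gamma_one_sub (1/3)
  rw [(by norm_num : (1:ℝ) - 1/3 = 2/3), (by ring : π * (1/3) = π/3),
    Real.sin_pi_div_three, div_div_eq_mul_div] at h
  rw [h]; ring

noncomputable def st16_tripleGamma (s : ℝ) : ℝ :=
  Gamma (s/3) * Gamma (s/3 + 1/3) * Gamma (s/3 + 2/3) * 3 ^ (s - 1) / (2 * π / √3)

lemma st16_tripleGamma_add_one (s : ℝ) (hs : s ≠ 0) :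
    st16_tripleGamma (s + 1) = s * st16_tripleGamma s := by
  have h1 : (s + 1)/3 = s/3 + 1/3 := by ring
  have h2 : s/3 + 1/3 + 1/3 = s/3 + 2/3 := by ring
  have h3 : s/3 + 1/3 + 2/3 = s/3 + 1 := by ring
  rw [st16_tripleGamma, st16_tripleGamma, h1, h2, h3,
    Gamma_add_one (div_ne_zero hs three_ne_zero),
    (by abel : s + 1 - 1 = s - 1 + 1), rpow_add three_pos, rpow_one]
  ring

lemma st16_tripleGamma_one : st16_tripleGamma 1 = 1 := by
  have hc : 2 * π / √3 ≠ 0 := by positivity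
  rw [st16_tripleGamma, (by norm_num : (1:ℝ)/3 + 1/3 = 2/3), (by norm_num : (1:ℝ)/3 + 2/3 = 1),
    Gamma_one, sub_self, rpow_zero, st16_Gamma_third_mul]
  field_simp

lemma st16_log_tripleGamma_eq :
    EqOn (log ∘ st16_tripleGamma)
      (fun s => log (Gamma (3⁻¹ * s + 0)) + log (Gamma (3⁻¹ * s + 1/3)) +
        log (Gamma (3⁻¹ * s + 2/3)) + s * log 3 - (log 3 + log (2 * π / √3)))
      (Ioi 0) := by
  intro s hs
  simp only [Set.mem_Ioi] at hs
  have e0 : 3⁻¹ * s + 0 = s/3 := by ring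
  have e1 : 3⁻¹ * s + 1/3 = s/3 + 1/3 := by ring
  have e2 : 3⁻¹ * s + 2/3 = s/3 + 2/3 := by ring
  have h1 : Gamma (s/3) ≠ 0 := (Gamma_pos_of_pos (by positivity)).ne'
  have h2 : Gamma (s/3 + 1/3) ≠ 0 := (Gamma_pos_of_pos (by positivity)).ne'
  have h3 : Gamma (s/3 + 2/3) ≠ 0 := (Gamma_pos_of_pos (by positivity)).ne'
  have h4 : (3:ℝ) ^ (s - 1) ≠ 0 := (rpow_pos_of_pos three_pos _).ne'
  have h5 : 2 * π / √3 ≠ 0 := by positivity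
  show log (st16_tripleGamma s) = log (Gamma (3⁻¹ * s + 0)) + log (Gamma (3⁻¹ * s + 1/3)) +
        log (Gamma (3⁻¹ * s + 2/3)) + s * log 3 - (log 3 + log (2 * π / √3))
  rw [st16_tripleGamma, e0, e1, e2,
    log_div (by exact mul_ne_zero (mul_ne_zero (mul_ne_zero h1 h2) h3) h4) h5,
    log_mul (mul_ne_zero (mul_ne_zero h1 h2) h3) h4,
    log_mul (mul_ne_zero h1 h2) h3, log_mul h1 h2, log_rpow three_pos]
  ring

lemma st16_tripleGamma_log_convex : ConvexOn ℝ (Ioi (0:ℝ)) (log ∘ st16_tripleGamma) := by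
  refine ConvexOn.congr ?_ st16_log_tripleGamma_eq.symm
  refine ((((st16_convexOn_logGamma_comp 3⁻¹ 0 (by norm_num) le_rfl).add
    (st16_convexOn_logGamma_comp 3⁻¹ (1/3) (by norm_num) (by norm_num))).add
    (st16_convexOn_logGamma_comp 3⁻¹ (2/3) (by norm_num) (by norm_num))).add ?_).add_const _
  simpa only [smul_eq_mul, id_eq, mul_comm _ (log _)] using
    (convexOn_id (convex_Ioi (0:ℝ))).smul (log_nonneg (by norm_num : (1:ℝ) ≤ 3))

lemma st16_tripleGamma_eq_Gamma {s : ℝ} (hs : 0 < s) : st16_tripleGamma s = Gamma s := by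
  refine eq_Gamma_of_log_convex st16_tripleGamma_log_convex
    (fun {y} hy => st16_tripleGamma_add_one y hy.ne') (fun {y} hy => ?_)
    st16_tripleGamma_one hs
  rw [st16_tripleGamma]
  have g1 : 0 < Gamma (y/3) := Gamma_pos_of_pos (by positivity)
  have g2 : 0 < Gamma (y/3 + 1/3) := Gamma_pos_of_pos (by positivity)
  have g3 : 0 < Gamma (y/3 + 2/3) := Gamma_pos_of_pos (by positivity)
  positivity

theorem st16_Gamma_triple {s : ℝ} (hs : 0 < s) :
    Gamma (s/3) * Gamma (s/3 + 1/3) * Gamma (s/3 + 2/3)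
      = Gamma s * (2 * π / √3) * 3 ^ (1 - s) := by
  have h := st16_tripleGamma_eq_Gamma hs
  rw [st16_tripleGamma, div_eq_iff (by positivity : 2 * π / √3 ≠ 0)] at h
  have hmul : (3:ℝ) ^ (s - 1) * 3 ^ (1 - s) = 1 := by
    rw [← rpow_add three_pos]; norm_num
  calc Gamma (s/3) * Gamma (s/3 + 1/3) * Gamma (s/3 + 2/3)
      = Gamma (s/3) * Gamma (s/3 + 1/3) * Gamma (s/3 + 2/3) * 3 ^ (s-1) * 3 ^ (1-s) := by
        rw [mul_assoc _ ((3:ℝ)^(s-1)), hmul, mul_one]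
    _ = Gamma s * (2 * π / √3) * 3 ^ (1 - s) := by rw [h]

lemma st16_sin_pi_fifth_mul : Real.sin (π/5) * Real.sin (2*π/5) = √5 / 4 := by
  have hc : Real.cos (π/5) = (1 + √5)/4 := Real.cos_pi_div_five
  have h2 : Real.sin (2*π/5) = 2 * Real.sin (π/5) * Real.cos (π/5) := by
    rw [(by ring : 2*π/5 = 2*(π/5)), Real.sin_two_mul]
  have hsq : Real.sin (π/5) ^ 2 = 1 - Real.cos (π/5) ^ 2 := Real.sin_sq (π/5)
  have h5 : √5 ^ 2 = 5 := Real.sq_sqrt (by norm_num)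
  calc Real.sin (π/5) * Real.sin (2*π/5)
      = 2 * Real.sin (π/5) ^ 2 * Real.cos (π/5) := by rw [h2]; ring
    _ = 2 * (1 - Real.cos (π/5) ^ 2) * Real.cos (π/5) := by rw [hsq]
    _ = 2 * (1 - ((1 + √5)/4) ^ 2) * ((1 + √5)/4) := by rw [hc]
    _ = √5 / 4 := by linear_combination (-(√5 + 3)/32) * h5

lemma st16_Gamma_fifth_mul :
    Real.Gamma (1/5) * Real.Gamma (2/5) * Real.Gamma (3/5) * Real.Gamma (4/5)
      = 4 * π ^ 2 / √5 := by
  have h1 := Real.Gamma_mul_Gamma_one_sub (1/5)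
  have h2 := Real.Gamma_mul_Gamma_one_sub (2/5)
  rw [(by norm_num : (1:ℝ) - 1/5 = 4/5), (by ring : π * (1/5) = π/5)] at h1
  rw [(by norm_num : (1:ℝ) - 2/5 = 3/5), (by ring : π * (2/5) = 2*π/5)] at h2
  have hs1 : 0 < Real.sin (π/5) := Real.sin_pos_of_pos_of_lt_pi (by positivity)
    (by nlinarith [Real.pi_pos])
  have hs2 : 0 < Real.sin (2*π/5) := Real.sin_pos_of_pos_of_lt_pi (by positivity)
    (by nlinarith [Real.pi_pos])
  have key : Real.Gamma (1/5) * Real.Gamma (2/5) * Real.Gamma (3/5) * Real.Gamma (4/5)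
      = (π / Real.sin (π/5)) * (π / Real.sin (2*π/5)) := by
    rw [← h1, ← h2]; ring
  rw [key, div_mul_div_comm, ← sq, div_eq_div_iff (by positivity) (by positivity),
    st16_sin_pi_fifth_mul]
  ring

noncomputable def st16_quintGamma (s : ℝ) : ℝ :=
  Gamma (s/5) * Gamma (s/5 + 1/5) * Gamma (s/5 + 2/5) * Gamma (s/5 + 3/5) * Gamma (s/5 + 4/5) *
    5 ^ (s - 1) / (4 * π ^ 2 / √5)

lemma st16_quintGamma_add_one (s : ℝ) (hs : s ≠ 0) :
    st16_quintGamma (s + 1) = s * st16_quintGamma s := by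
  have h1 : (s + 1)/5 = s/5 + 1/5 := by ring
  have h2 : s/5 + 1/5 + 1/5 = s/5 + 2/5 := by ring
  have h3 : s/5 + 1/5 + 2/5 = s/5 + 3/5 := by ring
  have h4 : s/5 + 1/5 + 3/5 = s/5 + 4/5 := by ring
  have h5 : s/5 + 1/5 + 4/5 = s/5 + 1 := by ring
  rw [st16_quintGamma, st16_quintGamma, h1, h2, h3, h4, h5,
    Gamma_add_one (div_ne_zero hs (by norm_num : (5:ℝ) ≠ 0)),
    (by abel : s + 1 - 1 = s - 1 + 1), rpow_add (by norm_num : (0:ℝ) < 5), rpow_one]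
  ring

lemma st16_quintGamma_one : st16_quintGamma 1 = 1 := by
  have hc : 4 * π ^ 2 / √5 ≠ 0 := by positivity
  rw [st16_quintGamma, (by norm_num : (1:ℝ)/5 + 1/5 = 2/5), (by norm_num : (1:ℝ)/5 + 2/5 = 3/5),
    (by norm_num : (1:ℝ)/5 + 3/5 = 4/5), (by norm_num : (1:ℝ)/5 + 4/5 = 1),
    Gamma_one, sub_self, rpow_zero, mul_one, st16_Gamma_fifth_mul]
  field_simp

lemma st16_log_quintGamma_eq :
    EqOn (log ∘ st16_quintGamma)
      (fun s => log (Gamma (5⁻¹ * s + 0)) + log (Gamma (5⁻¹ * s + 1/5)) +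
        log (Gamma (5⁻¹ * s + 2/5)) + log (Gamma (5⁻¹ * s + 3/5)) + log (Gamma (5⁻¹ * s + 4/5)) +
        s * log 5 - (log 5 + log (4 * π ^ 2 / √5)))
      (Ioi 0) := by
  intro s hs
  simp only [Set.mem_Ioi] at hs
  have e0 : 5⁻¹ * s + 0 = s/5 := by ring
  have e1 : 5⁻¹ * s + 1/5 = s/5 + 1/5 := by ring
  have e2 : 5⁻¹ * s + 2/5 = s/5 + 2/5 := by ring
  have e3 : 5⁻¹ * s + 3/5 = s/5 + 3/5 := by ring
  have e4 : 5⁻¹ * s + 4/5 = s/5 + 4/5 := by ring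
  have h1 : Gamma (s/5) ≠ 0 := (Gamma_pos_of_pos (by positivity)).ne'
  have h2 : Gamma (s/5 + 1/5) ≠ 0 := (Gamma_pos_of_pos (by positivity)).ne'
  have h3 : Gamma (s/5 + 2/5) ≠ 0 := (Gamma_pos_of_pos (by positivity)).ne'
  have h4 : Gamma (s/5 + 3/5) ≠ 0 := (Gamma_pos_of_pos (by positivity)).ne'
  have h5 : Gamma (s/5 + 4/5) ≠ 0 := (Gamma_pos_of_pos (by positivity)).ne'
  have h6 : (5:ℝ) ^ (s - 1) ≠ 0 := (rpow_pos_of_pos (by norm_num) _).ne'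
  have h7 : 4 * π ^ 2 / √5 ≠ 0 := by positivity
  show log (st16_quintGamma s) = log (Gamma (5⁻¹ * s + 0)) + log (Gamma (5⁻¹ * s + 1/5)) +
        log (Gamma (5⁻¹ * s + 2/5)) + log (Gamma (5⁻¹ * s + 3/5)) + log (Gamma (5⁻¹ * s + 4/5)) +
        s * log 5 - (log 5 + log (4 * π ^ 2 / √5))
  rw [st16_quintGamma, e0, e1, e2, e3, e4,
    log_div (by positivity) h7,
    log_mul (mul_ne_zero (mul_ne_zero (mul_ne_zero (mul_ne_zero h1 h2) h3) h4) h5) h6,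
    log_mul (mul_ne_zero (mul_ne_zero (mul_ne_zero h1 h2) h3) h4) h5,
    log_mul (mul_ne_zero (mul_ne_zero h1 h2) h3) h4,
    log_mul (mul_ne_zero h1 h2) h3, log_mul h1 h2, log_rpow (by norm_num)]
  ring

lemma st16_quintGamma_log_convex : ConvexOn ℝ (Ioi (0:ℝ)) (log ∘ st16_quintGamma) := by
  refine ConvexOn.congr ?_ st16_log_quintGamma_eq.symm
  refine ((((((st16_convexOn_logGamma_comp 5⁻¹ 0 (by norm_num) le_rfl).add
    (st16_convexOn_logGamma_comp 5⁻¹ (1/5) (by norm_num) (by norm_num))).add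
    (st16_convexOn_logGamma_comp 5⁻¹ (2/5) (by norm_num) (by norm_num))).add
    (st16_convexOn_logGamma_comp 5⁻¹ (3/5) (by norm_num) (by norm_num))).add
    (st16_convexOn_logGamma_comp 5⁻¹ (4/5) (by norm_num) (by norm_num))).add ?_).add_const _
  simpa only [smul_eq_mul, id_eq, mul_comm _ (log _)] using
    (convexOn_id (convex_Ioi (0:ℝ))).smul (log_nonneg (by norm_num : (1:ℝ) ≤ 5))

lemma st16_quintGamma_eq_Gamma {s : ℝ} (hs : 0 < s) : st16_quintGamma s = Gamma s := by
  refine eq_Gamma_of_log_convex st16_quintGamma_log_convex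
    (fun {y} hy => st16_quintGamma_add_one y hy.ne') (fun {y} hy => ?_)
    st16_quintGamma_one hs
  rw [st16_quintGamma]
  have g1 : 0 < Gamma (y/5) := Gamma_pos_of_pos (by positivity)
  have g2 : 0 < Gamma (y/5 + 1/5) := Gamma_pos_of_pos (by positivity)
  have g3 : 0 < Gamma (y/5 + 2/5) := Gamma_pos_of_pos (by positivity)
  have g4 : 0 < Gamma (y/5 + 3/5) := Gamma_pos_of_pos (by positivity)
  have g5 : 0 < Gamma (y/5 + 4/5) := Gamma_pos_of_pos (by positivity)
  positivity

theorem st16_Gamma_quint {s : ℝ} (hs : 0 < s) :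
    Gamma (s/5) * Gamma (s/5 + 1/5) * Gamma (s/5 + 2/5) * Gamma (s/5 + 3/5) * Gamma (s/5 + 4/5)
      = Gamma s * (4 * π ^ 2 / √5) * 5 ^ (1 - s) := by
  have h := st16_quintGamma_eq_Gamma hs
  rw [st16_quintGamma, div_eq_iff (by positivity : 4 * π ^ 2 / √5 ≠ 0)] at h
  have hmul : (5:ℝ) ^ (s - 1) * 5 ^ (1 - s) = 1 := by
    rw [← rpow_add (by norm_num : (0:ℝ) < 5)]; norm_num
  calc Gamma (s/5) * Gamma (s/5 + 1/5) * Gamma (s/5 + 2/5) * Gamma (s/5 + 3/5) * Gamma (s/5 + 4/5)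
      = Gamma (s/5) * Gamma (s/5 + 1/5) * Gamma (s/5 + 2/5) * Gamma (s/5 + 3/5) *
          Gamma (s/5 + 4/5) * 5 ^ (s-1) * 5 ^ (1-s) := by
        rw [mul_assoc _ ((5:ℝ)^(s-1)), hmul, mul_one]
    _ = Gamma s * (4 * π ^ 2 / √5) * 5 ^ (1 - s) := by rw [h]

set_option maxHeartbeats 4000000 in
/-- Example 6.4.9. Exact evaluation of the square of the Gamma-value of
the equation `x₁₀·x₁₂/(x₈·x₁₄)` for the Mumford–Tate group of the Jacobian of
`y² = x¹⁵ + 1`: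
`(Γ(10/15)³·Γ(12/15)²·Γ(6/15) / (Γ(8/15)²·Γ(14/15)³·Γ(2/15)))²
  = (3/16)·√5·(sin(π/15)³·sin(6π/15) / (sin(2π/15)·sin(3π/15)⁴·sin(5π/15)³))`. -/
theorem gamma_value_x10x12_x8x14_sq :
    (Complex.Gamma (10 / 15) ^ 3 * Complex.Gamma (12 / 15) ^ 2 * Complex.Gamma (6 / 15) /
        (Complex.Gamma (8 / 15) ^ 2 * Complex.Gamma (14 / 15) ^ 3 *
          Complex.Gamma (2 / 15))) ^ 2
      = (((3 / 16 : ℝ) * Real.sqrt 5 *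
          (Real.sin (Real.pi / 15) ^ 3 * Real.sin (6 * Real.pi / 15) /
            (Real.sin (2 * Real.pi / 15) * Real.sin (3 * Real.pi / 15) ^ 4 *
              Real.sin (5 * Real.pi / 15) ^ 3)) : ℝ) : ℂ) := by
  have hreal : (Real.Gamma (10/15) ^ 3 * Real.Gamma (12/15) ^ 2 * Real.Gamma (6/15) /
        (Real.Gamma (8/15) ^ 2 * Real.Gamma (14/15) ^ 3 * Real.Gamma (2/15))) ^ 2
      = 3 / 16 * Real.sqrt 5 * (Real.sin (π / 15) ^ 3 * Real.sin (6 * π / 15) / (Real.sin (2 * π / 15) * Real.sin (3 * π / 15) ^ 4 * Real.sin (5 * π / 15) ^ 3)) := by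

    have hS2 : 0 < Real.sin (π / 15) := Real.sin_pos_of_pos_of_lt_pi (by positivity) (by nlinarith [Real.pi_pos])
    have hS4 : 0 < Real.sin (2 * π / 15) := Real.sin_pos_of_pos_of_lt_pi (by positivity) (by nlinarith [Real.pi_pos])
    have hS6 : 0 < Real.sin (3 * π / 15) := Real.sin_pos_of_pos_of_lt_pi (by positivity) (by nlinarith [Real.pi_pos])
    have hS10 : 0 < Real.sin (5 * π / 15) := Real.sin_pos_of_pos_of_lt_pi (by positivity) (by nlinarith [Real.pi_pos])
    have hS12 : 0 < Real.sin (6 * π / 15) := Real.sin_pos_of_pos_of_lt_pi (by positivity) (by nlinarith [Real.pi_pos])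
    have hR2 : Real.Gamma (2/30) * Real.Gamma (28/30) * Real.sin (π / 15) = π := by
      have h := Real.Gamma_mul_Gamma_one_sub (2/30)
      rw [show (1:ℝ) - 2/30 = 28/30 by norm_num,
        show π * ((2:ℝ)/30) = π / 15 by ring] at h
      rw [h]
      exact div_mul_cancel₀ π hS2.ne'
    have hR4 : Real.Gamma (4/30) * Real.Gamma (26/30) * Real.sin (2 * π / 15) = π := by
      have h := Real.Gamma_mul_Gamma_one_sub (4/30)
      rw [show (1:ℝ) - 4/30 = 26/30 by norm_num,
        show π * ((4:ℝ)/30) = 2 * π / 15 by ring] at h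
      rw [h]
      exact div_mul_cancel₀ π hS4.ne'
    have hR6 : Real.Gamma (6/30) * Real.Gamma (24/30) * Real.sin (3 * π / 15) = π := by
      have h := Real.Gamma_mul_Gamma_one_sub (6/30)
      rw [show (1:ℝ) - 6/30 = 24/30 by norm_num,
        show π * ((6:ℝ)/30) = 3 * π / 15 by ring] at h
      rw [h]
      exact div_mul_cancel₀ π hS6.ne'
    have hR10 : Real.Gamma (10/30) * Real.Gamma (20/30) * Real.sin (5 * π / 15) = π := by
      have h := Real.Gamma_mul_Gamma_one_sub (10/30)
      rw [show (1:ℝ) - 10/30 = 20/30 by norm_num,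
        show π * ((10:ℝ)/30) = 5 * π / 15 by ring] at h
      rw [h]
      exact div_mul_cancel₀ π hS10.ne'
    have hR12 : Real.Gamma (12/30) * Real.Gamma (18/30) * Real.sin (6 * π / 15) = π := by
      have h := Real.Gamma_mul_Gamma_one_sub (12/30)
      rw [show (1:ℝ) - 12/30 = 18/30 by norm_num,
        show π * ((12:ℝ)/30) = 6 * π / 15 by ring] at h
      rw [h]
      exact div_mul_cancel₀ π hS12.ne'
    have hD1 : (Real.Gamma (1/30) * Real.Gamma (16/30)) ^ 30 = Real.Gamma (2/30) ^ 30 * 2 ^ 28 * π ^ 15 := by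
      have h := Real.Gamma_mul_Gamma_add_half ((1:ℝ)/30)
      rw [show (1:ℝ)/30 + 1/2 = 16/30 by norm_num,
        show (2:ℝ) * (1/30) = 2/30 by norm_num] at h
      rw [h, mul_pow, mul_pow, st16_rpow_nat 2 two_pos _ 30 28 (by norm_num), st16_sqrtpi_pow]
    have hD3 : (Real.Gamma (3/30) * Real.Gamma (18/30)) ^ 30 = Real.Gamma (6/30) ^ 30 * 2 ^ 24 * π ^ 15 := by
      have h := Real.Gamma_mul_Gamma_add_half ((3:ℝ)/30)
      rw [show (3:ℝ)/30 + 1/2 = 18/30 by norm_num,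
        show (2:ℝ) * (3/30) = 6/30 by norm_num] at h
      rw [h, mul_pow, mul_pow, st16_rpow_nat 2 two_pos _ 30 24 (by norm_num), st16_sqrtpi_pow]
    have hD4 : (Real.Gamma (4/30) * Real.Gamma (19/30)) ^ 30 = Real.Gamma (8/30) ^ 30 * 2 ^ 22 * π ^ 15 := by
      have h := Real.Gamma_mul_Gamma_add_half ((4:ℝ)/30)
      rw [show (4:ℝ)/30 + 1/2 = 19/30 by norm_num,
        show (2:ℝ) * (4/30) = 8/30 by norm_num] at h
      rw [h, mul_pow, mul_pow, st16_rpow_nat 2 two_pos _ 30 22 (by norm_num), st16_sqrtpi_pow]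
    have hD5 : (Real.Gamma (5/30) * Real.Gamma (20/30)) ^ 30 = Real.Gamma (10/30) ^ 30 * 2 ^ 20 * π ^ 15 := by
      have h := Real.Gamma_mul_Gamma_add_half ((5:ℝ)/30)
      rw [show (5:ℝ)/30 + 1/2 = 20/30 by norm_num,
        show (2:ℝ) * (5/30) = 10/30 by norm_num] at h
      rw [h, mul_pow, mul_pow, st16_rpow_nat 2 two_pos _ 30 20 (by norm_num), st16_sqrtpi_pow]
    have hD6 : (Real.Gamma (6/30) * Real.Gamma (21/30)) ^ 30 = Real.Gamma (12/30) ^ 30 * 2 ^ 18 * π ^ 15 := by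
      have h := Real.Gamma_mul_Gamma_add_half ((6:ℝ)/30)
      rw [show (6:ℝ)/30 + 1/2 = 21/30 by norm_num,
        show (2:ℝ) * (6/30) = 12/30 by norm_num] at h
      rw [h, mul_pow, mul_pow, st16_rpow_nat 2 two_pos _ 30 18 (by norm_num), st16_sqrtpi_pow]
    have hD7 : (Real.Gamma (7/30) * Real.Gamma (22/30)) ^ 30 = Real.Gamma (14/30) ^ 30 * 2 ^ 16 * π ^ 15 := by
      have h := Real.Gamma_mul_Gamma_add_half ((7:ℝ)/30)
      rw [show (7:ℝ)/30 + 1/2 = 22/30 by norm_num,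
        show (2:ℝ) * (7/30) = 14/30 by norm_num] at h
      rw [h, mul_pow, mul_pow, st16_rpow_nat 2 two_pos _ 30 16 (by norm_num), st16_sqrtpi_pow]
    have hD8 : (Real.Gamma (8/30) * Real.Gamma (23/30)) ^ 30 = Real.Gamma (16/30) ^ 30 * 2 ^ 14 * π ^ 15 := by
      have h := Real.Gamma_mul_Gamma_add_half ((8:ℝ)/30)
      rw [show (8:ℝ)/30 + 1/2 = 23/30 by norm_num,
        show (2:ℝ) * (8/30) = 16/30 by norm_num] at h
      rw [h, mul_pow, mul_pow, st16_rpow_nat 2 two_pos _ 30 14 (by norm_num), st16_sqrtpi_pow]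
    have hD9 : (Real.Gamma (9/30) * Real.Gamma (24/30)) ^ 30 = Real.Gamma (18/30) ^ 30 * 2 ^ 12 * π ^ 15 := by
      have h := Real.Gamma_mul_Gamma_add_half ((9:ℝ)/30)
      rw [show (9:ℝ)/30 + 1/2 = 24/30 by norm_num,
        show (2:ℝ) * (9/30) = 18/30 by norm_num] at h
      rw [h, mul_pow, mul_pow, st16_rpow_nat 2 two_pos _ 30 12 (by norm_num), st16_sqrtpi_pow]
    have hD10 : (Real.Gamma (10/30) * Real.Gamma (25/30)) ^ 30 = Real.Gamma (20/30) ^ 30 * 2 ^ 10 * π ^ 15 := by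
      have h := Real.Gamma_mul_Gamma_add_half ((10:ℝ)/30)
      rw [show (10:ℝ)/30 + 1/2 = 25/30 by norm_num,
        show (2:ℝ) * (10/30) = 20/30 by norm_num] at h
      rw [h, mul_pow, mul_pow, st16_rpow_nat 2 two_pos _ 30 10 (by norm_num), st16_sqrtpi_pow]
    have hD11 : (Real.Gamma (11/30) * Real.Gamma (26/30)) ^ 30 = Real.Gamma (22/30) ^ 30 * 2 ^ 8 * π ^ 15 := by
      have h := Real.Gamma_mul_Gamma_add_half ((11:ℝ)/30)
      rw [show (11:ℝ)/30 + 1/2 = 26/30 by norm_num,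
        show (2:ℝ) * (11/30) = 22/30 by norm_num] at h
      rw [h, mul_pow, mul_pow, st16_rpow_nat 2 two_pos _ 30 8 (by norm_num), st16_sqrtpi_pow]
    have hD13 : (Real.Gamma (13/30) * Real.Gamma (28/30)) ^ 30 = Real.Gamma (26/30) ^ 30 * 2 ^ 4 * π ^ 15 := by
      have h := Real.Gamma_mul_Gamma_add_half ((13:ℝ)/30)
      rw [show (13:ℝ)/30 + 1/2 = 28/30 by norm_num,
        show (2:ℝ) * (13/30) = 26/30 by norm_num] at h
      rw [h, mul_pow, mul_pow, st16_rpow_nat 2 two_pos _ 30 4 (by norm_num), st16_sqrtpi_pow]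
    have hT1 : (Real.Gamma (1/30) * Real.Gamma (11/30) * Real.Gamma (21/30)) ^ 10 = Real.Gamma (3/30) ^ 10 * 2 ^ 10 * π ^ 10 * 3 ^ 4 := by
      have h := st16_Gamma_triple (by norm_num : (0:ℝ) < 1/10)
      rw [show (1:ℝ)/10/3 + 1/3 = 11/30 by norm_num,
        show (1:ℝ)/10/3 + 2/3 = 21/30 by norm_num,
        show (1:ℝ)/10/3 = 1/30 by norm_num,
        show (1:ℝ)/10 = 3/30 by norm_num] at h
      rw [h, mul_pow, mul_pow, st16_rpow_nat 3 three_pos _ 10 9 (by norm_num),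
        div_pow, mul_pow, st16_sqrt3_pow]
      ring
    have hT2 : (Real.Gamma (2/30) * Real.Gamma (12/30) * Real.Gamma (22/30)) ^ 10 = Real.Gamma (6/30) ^ 10 * 2 ^ 10 * π ^ 10 * 3 ^ 3 := by
      have h := st16_Gamma_triple (by norm_num : (0:ℝ) < 2/10)
      rw [show (2:ℝ)/10/3 + 1/3 = 12/30 by norm_num,
        show (2:ℝ)/10/3 + 2/3 = 22/30 by norm_num,
        show (2:ℝ)/10/3 = 2/30 by norm_num,
        show (2:ℝ)/10 = 6/30 by norm_num] at h
      rw [h, mul_pow, mul_pow, st16_rpow_nat 3 three_pos _ 10 8 (by norm_num),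
        div_pow, mul_pow, st16_sqrt3_pow]
      ring
    have hT3 : (Real.Gamma (3/30) * Real.Gamma (13/30) * Real.Gamma (23/30)) ^ 10 = Real.Gamma (9/30) ^ 10 * 2 ^ 10 * π ^ 10 * 3 ^ 2 := by
      have h := st16_Gamma_triple (by norm_num : (0:ℝ) < 3/10)
      rw [show (3:ℝ)/10/3 + 1/3 = 13/30 by norm_num,
        show (3:ℝ)/10/3 + 2/3 = 23/30 by norm_num,
        show (3:ℝ)/10/3 = 3/30 by norm_num,
        show (3:ℝ)/10 = 9/30 by norm_num] at h
      rw [h, mul_pow, mul_pow, st16_rpow_nat 3 three_pos _ 10 7 (by norm_num),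
        div_pow, mul_pow, st16_sqrt3_pow]
      ring
    have hT4 : (Real.Gamma (4/30) * Real.Gamma (14/30) * Real.Gamma (24/30)) ^ 10 = Real.Gamma (12/30) ^ 10 * 2 ^ 10 * π ^ 10 * 3 ^ 1 := by
      have h := st16_Gamma_triple (by norm_num : (0:ℝ) < 4/10)
      rw [show (4:ℝ)/10/3 + 1/3 = 14/30 by norm_num,
        show (4:ℝ)/10/3 + 2/3 = 24/30 by norm_num,
        show (4:ℝ)/10/3 = 4/30 by norm_num,
        show (4:ℝ)/10 = 12/30 by norm_num] at h
      rw [h, mul_pow, mul_pow, st16_rpow_nat 3 three_pos _ 10 6 (by norm_num),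
        div_pow, mul_pow, st16_sqrt3_pow]
      ring
    have hQ1 : (Real.Gamma (1/30) * Real.Gamma (7/30) * Real.Gamma (13/30) * Real.Gamma (19/30) * Real.Gamma (25/30)) ^ 6 = Real.Gamma (5/30) ^ 6 * 2 ^ 12 * π ^ 12 * 5 ^ 2 := by
      have h := st16_Gamma_quint (by norm_num : (0:ℝ) < 1/6)
      rw [show (1:ℝ)/6/5 + 1/5 = 7/30 by norm_num,
        show (1:ℝ)/6/5 + 2/5 = 13/30 by norm_num,
        show (1:ℝ)/6/5 + 3/5 = 19/30 by norm_num,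
        show (1:ℝ)/6/5 + 4/5 = 25/30 by norm_num,
        show (1:ℝ)/6/5 = 1/30 by norm_num,
        show (1:ℝ)/6 = 5/30 by norm_num] at h
      rw [h, mul_pow, mul_pow, st16_rpow_nat 5 (by norm_num : (0:ℝ) < 5) _ 6 5 (by norm_num),
        div_pow, mul_pow, st16_sqrt5_pow]
      ring
    have key : (Real.Gamma (20/30) ^ 3 * Real.Gamma (24/30) ^ 2 * Real.Gamma (12/30)) ^ 120 *
        (16 * (Real.sin (2 * π / 15) * Real.sin (3 * π / 15) ^ 4 * Real.sin (5 * π / 15) ^ 3)) ^ 60 *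
        (Real.Gamma (2/30) * Real.Gamma (28/30) * Real.sin (π / 15)) ^ 180 *
        (π) ^ 60 *
        (π) ^ 240 *
        (π) ^ 180 *
        (Real.Gamma (12/30) * Real.Gamma (18/30) * Real.sin (6 * π / 15)) ^ 60 *
        ((Real.Gamma (1/30) * Real.Gamma (16/30)) ^ 30) ^ 11 *
        (Real.Gamma (6/30) ^ 30 * 2 ^ 24 * π ^ 15) ^ 5 *
        ((Real.Gamma (4/30) * Real.Gamma (19/30)) ^ 30) ^ 3 *
        (Real.Gamma (10/30) ^ 30 * 2 ^ 20 * π ^ 15) ^ 3 *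
        ((Real.Gamma (6/30) * Real.Gamma (21/30)) ^ 30) ^ 8 *
        ((Real.Gamma (7/30) * Real.Gamma (22/30)) ^ 30) ^ 3 *
        ((Real.Gamma (8/30) * Real.Gamma (23/30)) ^ 30) ^ 3 *
        (Real.Gamma (18/30) ^ 30 * 2 ^ 12 * π ^ 15) ^ 3 *
        ((Real.Gamma (10/30) * Real.Gamma (25/30)) ^ 30) ^ 3 *
        ((Real.Gamma (11/30) * Real.Gamma (26/30)) ^ 30) ^ 8 *
        ((Real.Gamma (13/30) * Real.Gamma (28/30)) ^ 30) ^ 6 *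
        (Real.Gamma (3/30) ^ 10 * 2 ^ 10 * π ^ 10 * 3 ^ 4) ^ 24 *
        ((Real.Gamma (2/30) * Real.Gamma (12/30) * Real.Gamma (22/30)) ^ 10) ^ 15 *
        (Real.Gamma (9/30) ^ 10 * 2 ^ 10 * π ^ 10 * 3 ^ 2) ^ 9 *
        ((Real.Gamma (4/30) * Real.Gamma (14/30) * Real.Gamma (24/30)) ^ 10) ^ 9 *
        (Real.Gamma (5/30) ^ 6 * 2 ^ 12 * π ^ 12 * 5 ^ 2) ^ 15
        = (Real.Gamma (16/30) ^ 2 * Real.Gamma (28/30) ^ 3 * Real.Gamma (4/30)) ^ 120 *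
        (3 ^ 60 * 5 ^ 30 * (Real.sin (π / 15) ^ 3 * Real.sin (6 * π / 15)) ^ 60) *
        (π) ^ 180 *
        (Real.Gamma (4/30) * Real.Gamma (26/30) * Real.sin (2 * π / 15)) ^ 60 *
        (Real.Gamma (6/30) * Real.Gamma (24/30) * Real.sin (3 * π / 15)) ^ 240 *
        (Real.Gamma (10/30) * Real.Gamma (20/30) * Real.sin (5 * π / 15)) ^ 180 *
        (π) ^ 60 *
        (Real.Gamma (2/30) ^ 30 * 2 ^ 28 * π ^ 15) ^ 11 *
        ((Real.Gamma (3/30) * Real.Gamma (18/30)) ^ 30) ^ 5 *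
        (Real.Gamma (8/30) ^ 30 * 2 ^ 22 * π ^ 15) ^ 3 *
        ((Real.Gamma (5/30) * Real.Gamma (20/30)) ^ 30) ^ 3 *
        (Real.Gamma (12/30) ^ 30 * 2 ^ 18 * π ^ 15) ^ 8 *
        (Real.Gamma (14/30) ^ 30 * 2 ^ 16 * π ^ 15) ^ 3 *
        (Real.Gamma (16/30) ^ 30 * 2 ^ 14 * π ^ 15) ^ 3 *
        ((Real.Gamma (9/30) * Real.Gamma (24/30)) ^ 30) ^ 3 *
        (Real.Gamma (20/30) ^ 30 * 2 ^ 10 * π ^ 15) ^ 3 *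
        (Real.Gamma (22/30) ^ 30 * 2 ^ 8 * π ^ 15) ^ 8 *
        (Real.Gamma (26/30) ^ 30 * 2 ^ 4 * π ^ 15) ^ 6 *
        ((Real.Gamma (1/30) * Real.Gamma (11/30) * Real.Gamma (21/30)) ^ 10) ^ 24 *
        (Real.Gamma (6/30) ^ 10 * 2 ^ 10 * π ^ 10 * 3 ^ 3) ^ 15 *
        ((Real.Gamma (3/30) * Real.Gamma (13/30) * Real.Gamma (23/30)) ^ 10) ^ 9 *
        (Real.Gamma (12/30) ^ 10 * 2 ^ 10 * π ^ 10 * 3 ^ 1) ^ 9 *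
        ((Real.Gamma (1/30) * Real.Gamma (7/30) * Real.Gamma (13/30) * Real.Gamma (19/30) * Real.Gamma (25/30)) ^ 6) ^ 15 := by
      ring
    rw [hR2, hR4, hR6, hR10, hR12, hD1, hD3, hD4, hD5, hD6, hD7, hD8, hD9, hD10, hD11, hD13, hT1, hT2, hT3, hT4, hQ1] at key
    have main : (Real.Gamma (20/30) ^ 3 * Real.Gamma (24/30) ^ 2 * Real.Gamma (12/30)) ^ 120 * (16 * (Real.sin (2 * π / 15) * Real.sin (3 * π / 15) ^ 4 * Real.sin (5 * π / 15) ^ 3)) ^ 60 = (Real.Gamma (16/30) ^ 2 * Real.Gamma (28/30) ^ 3 * Real.Gamma (4/30)) ^ 120 * (3 ^ 60 * 5 ^ 30 * (Real.sin (π / 15) ^ 3 * Real.sin (6 * π / 15)) ^ 60) := by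
      have hQpos : (0:ℝ) < (π) ^ 180 *
        (π) ^ 60 *
        (π) ^ 240 *
        (π) ^ 180 *
        (π) ^ 60 *
        (Real.Gamma (2/30) ^ 30 * 2 ^ 28 * π ^ 15) ^ 11 *
        (Real.Gamma (6/30) ^ 30 * 2 ^ 24 * π ^ 15) ^ 5 *
        (Real.Gamma (8/30) ^ 30 * 2 ^ 22 * π ^ 15) ^ 3 *
        (Real.Gamma (10/30) ^ 30 * 2 ^ 20 * π ^ 15) ^ 3 *
        (Real.Gamma (12/30) ^ 30 * 2 ^ 18 * π ^ 15) ^ 8 *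
        (Real.Gamma (14/30) ^ 30 * 2 ^ 16 * π ^ 15) ^ 3 *
        (Real.Gamma (16/30) ^ 30 * 2 ^ 14 * π ^ 15) ^ 3 *
        (Real.Gamma (18/30) ^ 30 * 2 ^ 12 * π ^ 15) ^ 3 *
        (Real.Gamma (20/30) ^ 30 * 2 ^ 10 * π ^ 15) ^ 3 *
        (Real.Gamma (22/30) ^ 30 * 2 ^ 8 * π ^ 15) ^ 8 *
        (Real.Gamma (26/30) ^ 30 * 2 ^ 4 * π ^ 15) ^ 6 *
        (Real.Gamma (3/30) ^ 10 * 2 ^ 10 * π ^ 10 * 3 ^ 4) ^ 24 *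
        (Real.Gamma (6/30) ^ 10 * 2 ^ 10 * π ^ 10 * 3 ^ 3) ^ 15 *
        (Real.Gamma (9/30) ^ 10 * 2 ^ 10 * π ^ 10 * 3 ^ 2) ^ 9 *
        (Real.Gamma (12/30) ^ 10 * 2 ^ 10 * π ^ 10 * 3 ^ 1) ^ 9 *
        (Real.Gamma (5/30) ^ 6 * 2 ^ 12 * π ^ 12 * 5 ^ 2) ^ 15 := by positivity
      apply mul_right_cancel₀ hQpos.ne'
      linear_combination key
    clear key

    rw [show (10:ℝ)/15 = 20/30 by norm_num, show (12:ℝ)/15 = 24/30 by norm_num,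
      show (6:ℝ)/15 = 12/30 by norm_num, show (8:ℝ)/15 = 16/30 by norm_num,
      show (14:ℝ)/15 = 28/30 by norm_num, show (2:ℝ)/15 = 4/30 by norm_num]
    have hden : 0 < Real.sin (2 * π / 15) * Real.sin (3 * π / 15) ^ 4 * Real.sin (5 * π / 15) ^ 3 :=
      mul_pos (mul_pos hS4 (pow_pos hS6 4)) (pow_pos hS10 3)
    have hY60 : (3 / 16 * Real.sqrt 5 * (Real.sin (π / 15) ^ 3 * Real.sin (6 * π / 15) / (Real.sin (2 * π / 15) * Real.sin (3 * π / 15) ^ 4 * Real.sin (5 * π / 15) ^ 3))) ^ 60 = (3 ^ 60 * 5 ^ 30 * (Real.sin (π / 15) ^ 3 * Real.sin (6 * π / 15)) ^ 60) / (16 * (Real.sin (2 * π / 15) * Real.sin (3 * π / 15) ^ 4 * Real.sin (5 * π / 15) ^ 3)) ^ 60 := by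
      rw [show (3 / 16 * Real.sqrt 5 * (Real.sin (π / 15) ^ 3 * Real.sin (6 * π / 15) / (Real.sin (2 * π / 15) * Real.sin (3 * π / 15) ^ 4 * Real.sin (5 * π / 15) ^ 3))) ^ 60
          = ((√5:ℝ) ^ 2) ^ 30 * ((3:ℝ) / 16 * (Real.sin (π / 15) ^ 3 * Real.sin (6 * π / 15) / (Real.sin (2 * π / 15) * Real.sin (3 * π / 15) ^ 4 * Real.sin (5 * π / 15) ^ 3))) ^ 60 by ring,
        Real.sq_sqrt (by norm_num : (0:ℝ) ≤ 5)]
      ring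
    refine (pow_left_inj₀ (by positivity) ?_ (by norm_num : (60:ℕ) ≠ 0)).mp ?_
    · exact le_of_lt (mul_pos (mul_pos (by norm_num) (Real.sqrt_pos.mpr (by norm_num)))
        (div_pos (mul_pos (pow_pos hS2 3) hS12) hden))
    calc ((Real.Gamma (20/30) ^ 3 * Real.Gamma (24/30) ^ 2 * Real.Gamma (12/30) / (Real.Gamma (16/30) ^ 2 * Real.Gamma (28/30) ^ 3 * Real.Gamma (4/30))) ^ 2) ^ 60
        = (Real.Gamma (20/30) ^ 3 * Real.Gamma (24/30) ^ 2 * Real.Gamma (12/30)) ^ 120 / (Real.Gamma (16/30) ^ 2 * Real.Gamma (28/30) ^ 3 * Real.Gamma (4/30)) ^ 120 := by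
          rw [← pow_mul, div_pow]
      _ = (3 ^ 60 * 5 ^ 30 * (Real.sin (π / 15) ^ 3 * Real.sin (6 * π / 15)) ^ 60) / (16 * (Real.sin (2 * π / 15) * Real.sin (3 * π / 15) ^ 4 * Real.sin (5 * π / 15) ^ 3)) ^ 60 := by
          rw [div_eq_div_iff (by positivity) (pow_ne_zero 60 (mul_pos (by norm_num : (0:ℝ) < 16) hden).ne')]
          linear_combination main
      _ = (3 / 16 * Real.sqrt 5 * (Real.sin (π / 15) ^ 3 * Real.sin (6 * π / 15) / (Real.sin (2 * π / 15) * Real.sin (3 * π / 15) ^ 4 * Real.sin (5 * π / 15) ^ 3))) ^ 60 := hY60.symm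
  rw [show (10/15 : ℂ) = ((10/15 : ℝ) : ℂ) by norm_num,
    show (12/15 : ℂ) = ((12/15 : ℝ) : ℂ) by norm_num,
    show (6/15 : ℂ) = ((6/15 : ℝ) : ℂ) by norm_num,
    show (8/15 : ℂ) = ((8/15 : ℝ) : ℂ) by norm_num,
    show (14/15 : ℂ) = ((14/15 : ℝ) : ℂ) by norm_num,
    show (2/15 : ℂ) = ((2/15 : ℝ) : ℂ) by norm_num]
  simp only [Complex.Gamma_ofReal]
  exact_mod_cast hreal
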